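/- The MPW solution is the unique solution for TUX games satisfying efficiency, 2-standardness, and Sobolev consistency (with respect to the restriction operator r*). -/

import Mathlib

open Finset BigOperators

namespace TUX

/-- A (raw) game in partition function form: assigns a real worth to each
coalition together with a partition (of the outside players). -/
abbrev Game := Finset ℕ → Finset (Finset ℕ) → ℝ

/-- A TU game (characteristic function). -/
abbrev TUGame := Finset ℕ → ℝ

/-- A solution for TUX games: given a player set and a game, assigns payoffs. -/
abbrev Sol := Finset ℕ → Game → ℕ → ℝ

/-- `w` is a genuine TUX game: the empty coalition has worth 0. -/
def IsTUX (w : Game) : Prop := ∀ π, w ∅ π = 0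

/-- `π` is a partition of the finite set `M`. -/
def IsPartition (M : Finset ℕ) (π : Finset (Finset ℕ)) : Prop :=
  (∀ B ∈ π, B ⊆ M) ∧ ∅ ∉ π ∧ ∀ x ∈ M, (π.filter (fun B => x ∈ B)).card = 1

instance (M : Finset ℕ) : DecidablePred (IsPartition M) := fun π => by
  unfold IsPartition; infer_instance

/-- The finite set of all partitions of `M`. -/
def partitionsOf (M : Finset ℕ) : Finset (Finset (Finset ℕ)) :=
  (M.powerset.powerset).filter (IsPartition M)

/-- The Ewens(θ = 1) probability of the partition `π` of `M`:
`p*_M(π) = ∏_{B ∈ π} (|B| - 1)! / |M|!`. -/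
noncomputable def pstar (M : Finset ℕ) (π : Finset (Finset ℕ)) : ℝ :=
  (∏ B ∈ π, ((B.card - 1).factorial : ℝ)) / (M.card.factorial : ℝ)

/-- The block of `π` containing `j` (junk if `π` is not a partition containing `j`). -/
def blockOf (π : Finset (Finset ℕ)) (j : ℕ) : Finset ℕ :=
  (π.filter (fun B => j ∈ B)).sup id

/-- Add player `i` to the block `B` of `π`. -/
def addToBlock (π : Finset (Finset ℕ)) (i : ℕ) (B : Finset ℕ) : Finset (Finset ℕ) :=
  insert (insert i B) (π.erase B)

/-- The restriction operator `r⋆` removing a single player `i` from a game on `N`: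
`w₋ᵢ(S,π) = (1/(n-s)) (w(S, π₊ᵢ⇝∅) + ∑_{j ∈ N∖(S∪{i})} w(S, π₊ᵢ⇝π(j)))`. -/
noncomputable def restrict1 (N : Finset ℕ) (w : Game) (i : ℕ) : Game :=
  fun S π =>
    ((N.card : ℝ) - (S.card : ℝ))⁻¹ *
      (w S (insert {i} π) + ∑ j ∈ (N \ S).erase i, w S (addToBlock π i (blockOf π j)))

/-- Iterated removal of a list of players. -/
noncomputable def restrictL : Finset ℕ → Game → List ℕ → Game
  | _, w, [] => w
  | N, w, i :: l => restrictL (N.erase i) (restrict1 N w i) l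

/-- Removal of a set of players (via the increasing enumeration; by path
independence of `r⋆` the order is immaterial). -/
noncomputable def restrictSet (N : Finset ℕ) (w : Game) (T : Finset ℕ) : Game :=
  restrictL N w (T.sort (· ≤ ·))

/-- The average TU game `v̄_w` of a TUX game `w` on `N`. -/
noncomputable def avg (N : Finset ℕ) (w : Game) : TUGame :=
  fun S => ∑ π ∈ partitionsOf (N \ S), pstar (N \ S) π * w S π

/-- The auxiliary TU game `v*_w(S) = w₋(N∖S)(S,∅)`. -/
noncomputable def auxGame (N : Finset ℕ) (w : Game) : TUGame :=
  fun S => restrictSet N w (N \ S) S ∅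

/-- The Shapley value of a TU game on player set `N`. -/
noncomputable def shapley (N : Finset ℕ) (v : TUGame) (i : ℕ) : ℝ :=
  ∑ S ∈ (N.erase i).powerset,
    (((S.card.factorial : ℝ) * ((N.card - S.card - 1).factorial : ℝ)) / (N.card.factorial : ℝ)) *
      (v (insert i S) - v S)

/-- The MPW solution: the Shapley value of the average game. -/
noncomputable def MPW (N : Finset ℕ) (w : Game) (i : ℕ) : ℝ := shapley N (avg N w) i

/-- The MPW solution as a solution for TUX games. -/
noncomputable def MPWsol : Sol := fun N w i => MPW N w i

/-- The scaled Dirac TUX game `δ_{T,τ}` on `N`. -/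
noncomputable def scaledDirac (N T : Finset ℕ) (τ : Finset (Finset ℕ)) : Game :=
  fun S π => if S = T ∧ π = τ then (pstar (N \ T) τ)⁻¹ else 0

/-- `τ₋S`: remove the players of `S` from each block of `τ`, discarding empty blocks. -/
def partRemove (τ : Finset (Finset ℕ)) (S : Finset ℕ) : Finset (Finset ℕ) :=
  (τ.image (fun B => B \ S)).erase ∅

/-- The Sobolev-reduced TUX game `w₋ⱼ^{So,φ}` on `N ∖ {j}`. -/
noncomputable def sobRed (N : Finset ℕ) (φ : Sol) (w : Game) (j : ℕ) : Game :=
  fun S π =>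
    ((S.card : ℝ) / ((N.card : ℝ) - 1)) * (w (insert j S) π - φ N w j) +
      (1 - (S.card : ℝ) / ((N.card : ℝ) - 1)) * restrict1 N w j S π

/-- The Hart–Mas-Colell reduced TUX game `w₋T^{HM,φ}` on `N ∖ T`. -/
noncomputable def hmRed (N : Finset ℕ) (φ : Sol) (w : Game) (T : Finset ℕ) : Game :=
  fun S π => w (S ∪ T) π - ∑ j ∈ T, φ (S ∪ T) (restrictSet N w (N \ (S ∪ T))) j

/-- Efficiency for TUX games. -/
def EfficientX (φ : Sol) : Prop :=
  ∀ (N : Finset ℕ) (w : Game), IsTUX w → ∑ i ∈ N, φ N w i = w N ∅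

/-- Balanced contributions for TUX games (w.r.t. the restriction operator `r⋆`). -/
def BalancedContributionsX (φ : Sol) : Prop :=
  ∀ (N : Finset ℕ) (w : Game), IsTUX w → ∀ i ∈ N, ∀ j ∈ N,
    φ N w i - φ (N.erase j) (restrict1 N w j) i
      = φ N w j - φ (N.erase i) (restrict1 N w i) j

/-- 2-standardness for TUX games. -/
def TwoStandardX (φ : Sol) : Prop :=
  ∀ i j : ℕ, i ≠ j → ∀ w : Game, IsTUX w →
    φ {i, j} w i
      = w {i} {({j} : Finset ℕ)}
        + (w {i, j} ∅ - w {j} {({i} : Finset ℕ)} - w {i} {({j} : Finset ℕ)}) / 2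

/-- Sobolev consistency for TUX games. -/
def SobolevConsistentX (φ : Sol) : Prop :=
  ∀ (N : Finset ℕ) (w : Game), IsTUX w → ∀ i ∈ N, ∀ j ∈ N, i ≠ j →
    φ N w i = φ (N.erase j) (sobRed N φ w j) i

/-- Hart–Mas-Colell consistency (single-player removal) for TUX games. -/
def HMConsistentX (φ : Sol) : Prop :=
  ∀ (N : Finset ℕ) (w : Game), IsTUX w → ∀ i ∈ N, ∀ j ∈ N, i ≠ j →
    φ N w i = φ (N.erase j) (hmRed N φ w {j}) i

/-- Set Hart–Mas-Colell consistency (removal of a coalition) for TUX games. -/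
def SetHMConsistentX (φ : Sol) : Prop :=
  ∀ (N : Finset ℕ) (w : Game), IsTUX w → ∀ i ∈ N, ∀ T ⊆ N.erase i,
    φ N w i = φ (N \ T) (hmRed N φ w T) i

/-- The finite set of embedded coalitions `(T,τ)` of `N` with `T ≠ ∅`. -/
def embeddedNE (N : Finset ℕ) : Finset (Finset ℕ × Finset (Finset ℕ)) :=
  (N.powerset ×ˢ N.powerset.powerset).filter
    (fun p => p.1.Nonempty ∧ IsPartition (N \ p.1) p.2)

end TUX

namespace TUX
set_option linter.dupNamespace false

lemma mem_partitionsOf {M : Finset ℕ} {π : Finset (Finset ℕ)} :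
    π ∈ partitionsOf M ↔ IsPartition M π := by
  unfold partitionsOf
  simp only [mem_filter, mem_powerset, and_iff_right_iff_imp]
  intro h
  intro B hB
  simp only [mem_powerset]
  exact h.1 B hB

lemma IsPartition.filter_eq {M : Finset ℕ} {π : Finset (Finset ℕ)} (h : IsPartition M π)
    {x : ℕ} (hx : x ∈ M) : π.filter (fun B => x ∈ B) = {blockOf π x} := by
  obtain ⟨B, hB⟩ := Finset.card_eq_one.mp (h.2.2 x hx)
  have hbo : blockOf π x = B := by simp [blockOf, hB]
  rw [hbo]; exact hB

lemma IsPartition.blockOf_mem {M : Finset ℕ} {π : Finset (Finset ℕ)} (h : IsPartition M π)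
    {x : ℕ} (hx : x ∈ M) : blockOf π x ∈ π ∧ x ∈ blockOf π x := by
  have h1 := IsPartition.filter_eq h hx
  have h2 : blockOf π x ∈ π.filter (fun B => x ∈ B) := by rw [h1]; exact mem_singleton_self _
  exact ⟨(mem_filter.mp h2).1, (mem_filter.mp h2).2⟩

lemma IsPartition.blockOf_unique {M : Finset ℕ} {π : Finset (Finset ℕ)} (h : IsPartition M π)
    {x : ℕ} {C : Finset ℕ} (hC : C ∈ π) (hxC : x ∈ C) : C = blockOf π x := by
  have hx : x ∈ M := h.1 C hC hxC
  have h2 : C ∈ π.filter (fun B => x ∈ B) := mem_filter.mpr ⟨hC, hxC⟩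
  rw [IsPartition.filter_eq h hx] at h2
  exact mem_singleton.mp h2

lemma IsPartition.biUnion_eq {M : Finset ℕ} {π : Finset (Finset ℕ)} (h : IsPartition M π) :
    π.biUnion id = M := by
  ext x
  simp only [mem_biUnion, id]
  constructor
  · rintro ⟨B, hB, hxB⟩; exact h.1 B hB hxB
  · intro hx
    exact ⟨blockOf π x, (IsPartition.blockOf_mem h hx).1, (IsPartition.blockOf_mem h hx).2⟩

lemma IsPartition.disjoint {M : Finset ℕ} {π : Finset (Finset ℕ)} (h : IsPartition M π)
    {B C : Finset ℕ} (hB : B ∈ π) (hC : C ∈ π) (hBC : B ≠ C) : Disjoint B C := by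
  rw [Finset.disjoint_left]
  intro x hxB hxC
  exact hBC ((IsPartition.blockOf_unique h hB hxB).trans
    (IsPartition.blockOf_unique h hC hxC).symm)

lemma IsPartition.nonempty_of_mem {M : Finset ℕ} {π : Finset (Finset ℕ)} (h : IsPartition M π)
    {B : Finset ℕ} (hB : B ∈ π) : B.Nonempty := by
  rcases B.eq_empty_or_nonempty with rfl | hne
  · exact absurd hB h.2.1
  · exact hne

/-- group a sum over `M` by blocks of a partition of `M`. -/
lemma IsPartition.sum_blocks {M : Finset ℕ} {π : Finset (Finset ℕ)} (h : IsPartition M π)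
    (g : Finset ℕ → ℝ) :
    ∑ k ∈ M, g (blockOf π k) = ∑ B ∈ π, (B.card : ℝ) * g B := by
  conv_lhs => rw [← IsPartition.biUnion_eq h]
  rw [Finset.sum_biUnion]
  · apply Finset.sum_congr rfl
    intro B hB
    simp only [id]
    have hc : ∀ k ∈ B, g (blockOf π k) = g B := by
      intro k hk
      rw [← IsPartition.blockOf_unique h hB hk]
    rw [Finset.sum_congr rfl hc, Finset.sum_const, nsmul_eq_mul]
  · intro B hB C hC hBC
    exact IsPartition.disjoint h hB hC hBC

lemma partitionsOf_empty : partitionsOf ∅ = {∅} := by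
  ext π
  rw [mem_partitionsOf, mem_singleton]
  constructor
  · intro h
    by_contra hne
    obtain ⟨B, hB⟩ := Finset.nonempty_iff_ne_empty.mpr hne
    have hsub : B ⊆ ∅ := h.1 B hB
    have hBe : B = ∅ := Finset.subset_empty.mp hsub
    exact h.2.1 (hBe ▸ hB)
  · rintro rfl
    refine ⟨by simp, by simp, by simp⟩

lemma isPartition_singleton (x : ℕ) : IsPartition {x} {({x} : Finset ℕ)} := by
  refine ⟨by simp, ?_, ?_⟩
  · exact fun h => (Finset.singleton_ne_empty x) ((Finset.mem_singleton.mp h).symm)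
  · intro y hy
    simp only [mem_singleton] at hy
    subst hy
    rw [Finset.filter_singleton]
    simp

lemma partitionsOf_singleton (x : ℕ) : partitionsOf {x} = {{({x} : Finset ℕ)}} := by
  ext π
  rw [mem_partitionsOf, mem_singleton]
  constructor
  · intro h
    have hx : x ∈ ({x} : Finset ℕ) := mem_singleton_self x
    have hB := IsPartition.blockOf_mem h hx
    have hBx : blockOf π x = {x} := by
      have hsub := h.1 _ hB.1
      exact Finset.Subset.antisymm hsub (Finset.singleton_subset_iff.mpr hB.2)
    apply Finset.Subset.antisymm
    · intro C hC
      rw [mem_singleton]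
      obtain ⟨y, hy⟩ := IsPartition.nonempty_of_mem h hC
      have hyx : y = x := by
        have := h.1 C hC hy; simpa using this
      subst hyx
      rw [IsPartition.blockOf_unique h hC hy, hBx]
    · simpa [hBx] using Finset.singleton_subset_iff.mpr hB.1
  · rintro rfl
    exact isPartition_singleton x

/-! ### CRP machinery -/

lemma isPartition_insert_new {M : Finset ℕ} {π : Finset (Finset ℕ)} (hj : j ∉ M)
    (h : IsPartition M π) : IsPartition (insert j M) (insert {j} π) := by
  have hjn : ∀ C ∈ π, j ∉ C := fun C hC hjC => hj (h.1 C hC hjC)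
  refine ⟨?_, ?_, ?_⟩
  · intro B hB
    rcases Finset.mem_insert.mp hB with rfl | hB
    · exact Finset.singleton_subset_iff.mpr (mem_insert_self j M)
    · exact (h.1 B hB).trans (Finset.subset_insert j M)
  · intro habs
    rcases Finset.mem_insert.mp habs with he | he
    · exact (Finset.singleton_ne_empty j) he.symm
    · exact h.2.1 he
  · intro x hx
    rcases Finset.mem_insert.mp hx with rfl | hx
    · rw [Finset.filter_insert, if_pos (mem_singleton_self x)]
      have : π.filter (fun B => x ∈ B) = ∅ :=
        Finset.filter_eq_empty_iff.mpr (fun {B} hB => hjn B hB)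
      rw [this]
      simp
    · have hxj : x ≠ j := fun he => hj (he ▸ hx)
      rw [Finset.filter_insert, if_neg (by simp [hxj])]
      exact h.2.2 x hx

lemma isPartition_addToBlock {M : Finset ℕ} {π : Finset (Finset ℕ)} {B : Finset ℕ} (hj : j ∉ M)
    (h : IsPartition M π) (hB : B ∈ π) : IsPartition (insert j M) (addToBlock π j B) := by
  have hjn : ∀ C ∈ π, j ∉ C := fun C hC hjC => hj (h.1 C hC hjC)
  unfold addToBlock
  refine ⟨?_, ?_, ?_⟩
  · intro C hC
    rcases Finset.mem_insert.mp hC with rfl | hC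
    · exact Finset.insert_subset_insert j (h.1 B hB)
    · exact (h.1 C (Finset.mem_of_mem_erase hC)).trans (Finset.subset_insert j M)
  · intro habs
    rcases Finset.mem_insert.mp habs with he | he
    · exact (Finset.insert_ne_empty j B) he.symm
    · exact h.2.1 (Finset.mem_of_mem_erase he)
  · intro x hx
    rcases Finset.mem_insert.mp hx with rfl | hx
    · rw [Finset.filter_insert, if_pos (mem_insert_self x B)]
      have h0 : (π.erase B).filter (fun C => x ∈ C) = ∅ :=
        Finset.filter_eq_empty_iff.mpr (fun {C} hC => hjn C (Finset.mem_of_mem_erase hC))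
      rw [h0]; simp
    · have hxj : x ≠ j := fun he => hj (he ▸ hx)
      by_cases hxB : x ∈ B
      · rw [Finset.filter_insert, if_pos (Finset.mem_insert_of_mem hxB)]
        have h0 : (π.erase B).filter (fun C => x ∈ C) = ∅ := by
          rw [Finset.filter_erase, IsPartition.filter_eq h hx,
            ← IsPartition.blockOf_unique h hB hxB]
          exact Finset.erase_singleton _
        rw [h0]; simp
      · rw [Finset.filter_insert, if_neg (by simp [hxj, hxB])]
        rw [Finset.filter_erase, IsPartition.filter_eq h hx]
        have hne : B ∉ ({blockOf π x} : Finset (Finset ℕ)) := by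
          simp only [mem_singleton]
          intro he
          exact hxB (he ▸ (IsPartition.blockOf_mem h hx).2)
        rw [Finset.erase_eq_of_notMem hne]
        simp

lemma newblock_not_mem {M : Finset ℕ} {π : Finset (Finset ℕ)} (hj : j ∉ M)
    (h : IsPartition M π) : ({j} : Finset ℕ) ∉ π :=
  fun habs => hj (h.1 _ habs (mem_singleton_self j))

lemma insertblock_not_mem_erase {M : Finset ℕ} {π : Finset (Finset ℕ)} {B : Finset ℕ}
    (hj : j ∉ M) (h : IsPartition M π) :
    insert j B ∉ π.erase B :=
  fun habs => hj (h.1 _ (Finset.mem_of_mem_erase habs) (mem_insert_self j B))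

lemma pstar_insert_new {M : Finset ℕ} {π : Finset (Finset ℕ)} (hj : j ∉ M)
    (h : IsPartition M π) :
    pstar (insert j M) (insert {j} π) = pstar M π * ((M.card : ℝ) + 1)⁻¹ := by
  unfold pstar
  rw [Finset.prod_insert (newblock_not_mem hj h), Finset.card_insert_of_notMem hj,
    Nat.factorial_succ]
  have h1 : (M.card.factorial : ℝ) ≠ 0 := Nat.cast_ne_zero.mpr (Nat.factorial_ne_zero _)
  have h2 : ((M.card : ℝ) + 1) ≠ 0 := by positivity
  simp only [Finset.card_singleton, Nat.sub_self, Nat.factorial_zero]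
  push_cast
  rw [div_eq_iff (by positivity), mul_comm ((M.card:ℝ)+1)]
  field_simp
  all_goals ring

lemma pstar_addToBlock {M : Finset ℕ} {π : Finset (Finset ℕ)} {B : Finset ℕ} (hj : j ∉ M)
    (h : IsPartition M π) (hB : B ∈ π) :
    pstar (insert j M) (addToBlock π j B)
      = (B.card : ℝ) * pstar M π * ((M.card : ℝ) + 1)⁻¹ := by
  have hjB : j ∉ B := fun habs => hj (h.1 B hB habs)
  have hBne : B.card ≠ 0 := Finset.card_ne_zero_of_mem ((IsPartition.nonempty_of_mem h hB).choose_spec)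
  unfold pstar addToBlock
  rw [Finset.prod_insert (insertblock_not_mem_erase hj h),
    Finset.card_insert_of_notMem hj, Nat.factorial_succ,
    Finset.card_insert_of_notMem hjB]
  rw [← Finset.mul_prod_erase π _ hB]
  have hfac : (B.card + 1 - 1).factorial = B.card * (B.card - 1).factorial := by
    simp only [Nat.add_sub_cancel]
    exact (Nat.mul_factorial_pred hBne).symm
  rw [hfac]
  have h1 : (M.card.factorial : ℝ) ≠ 0 := Nat.cast_ne_zero.mpr (Nat.factorial_ne_zero _)
  have h2 : ((M.card : ℝ) + 1) ≠ 0 := by positivity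
  push_cast
  rw [div_eq_iff (by positivity)]
  field_simp
  all_goals ring

/-- Extension map: attach `j` to partition `p.1` of `M` by choice `p.2`
(`∅` means a new singleton block). -/
def crpExt (j : ℕ) (p : Σ _ : Finset (Finset ℕ), Finset ℕ) : Finset (Finset ℕ) :=
  if p.2 = ∅ then insert {j} p.1 else addToBlock p.1 j p.2

/-- Inverse of the extension map. -/
def crpInv (j : ℕ) (π' : Finset (Finset ℕ)) : Σ _ : Finset (Finset ℕ), Finset ℕ :=
  ⟨if blockOf π' j = {j} then π'.erase {j}
    else insert ((blockOf π' j).erase j) (π'.erase (blockOf π' j)), (blockOf π' j).erase j⟩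

lemma blockOf_insert_new {M : Finset ℕ} {π : Finset (Finset ℕ)} (hj : j ∉ M)
    (h : IsPartition M π) : blockOf (insert {j} π) j = {j} :=
  ((isPartition_insert_new hj h).blockOf_unique (mem_insert_self _ _)
    (mem_singleton_self j)).symm

lemma blockOf_addToBlock {M : Finset ℕ} {π : Finset (Finset ℕ)} {B : Finset ℕ} (hj : j ∉ M)
    (h : IsPartition M π) (hB : B ∈ π) : blockOf (addToBlock π j B) j = insert j B :=
  ((isPartition_addToBlock hj h hB).blockOf_unique
    (by unfold addToBlock; exact mem_insert_self _ _) (mem_insert_self j B)).symm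

lemma insertj_ne_singleton {M : Finset ℕ} {π : Finset (Finset ℕ)} {B : Finset ℕ} (hj : j ∉ M)
    (h : IsPartition M π) (hB : B ∈ π) : insert j B ≠ {j} := by
  intro habs
  obtain ⟨x, hx⟩ := IsPartition.nonempty_of_mem h hB
  have hxM : x ∈ M := h.1 B hB hx
  have : x ∈ insert j B := Finset.mem_insert_of_mem hx
  rw [habs, mem_singleton] at this
  exact hj (this ▸ hxM)

lemma crpInv_crpExt {M : Finset ℕ} {π : Finset (Finset ℕ)} {B : Finset ℕ} (hj : j ∉ M)
    (h : IsPartition M π) (hB : B ∈ insert ∅ π) :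
    crpInv j (crpExt j ⟨π, B⟩) = ⟨π, B⟩ := by
  rcases Finset.mem_insert.mp hB with rfl | hBπ
  · -- new singleton block
    unfold crpExt
    rw [if_pos rfl]
    unfold crpInv
    rw [blockOf_insert_new hj h, if_pos rfl,
      Finset.erase_insert (newblock_not_mem hj h)]
    congr 1
    exact Finset.erase_singleton j
  · -- add to existing block B
    have hBne : B ≠ ∅ := fun he => h.2.1 (he ▸ hBπ)
    have hjB : j ∉ B := fun habs => hj (h.1 B hBπ habs)
    unfold crpExt
    rw [if_neg hBne]
    unfold crpInv
    rw [blockOf_addToBlock hj h hBπ, if_neg (insertj_ne_singleton hj h hBπ),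
      Finset.erase_insert hjB]
    unfold addToBlock
    rw [Finset.erase_insert (insertblock_not_mem_erase hj h),
      Finset.insert_erase hBπ]

lemma crpExt_crpInv {M : Finset ℕ} {π' : Finset (Finset ℕ)} (hj : j ∉ M)
    (h : IsPartition (insert j M) π') :
    crpExt j (crpInv j π') = π' := by
  have hjmem : j ∈ insert j M := mem_insert_self j M
  set B' := blockOf π' j with hB'
  have hmem := h.blockOf_mem hjmem
  by_cases hcase : B' = {j}
  · unfold crpInv
    rw [← hB', if_pos hcase]
    have h2 : (B'.erase j) = ∅ := by rw [hcase]; exact Finset.erase_singleton j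
    unfold crpExt
    rw [if_pos h2, ← hcase, Finset.insert_erase hmem.1]
  · unfold crpInv
    rw [← hB', if_neg hcase]
    have hB0ne : B'.erase j ≠ ∅ := by
      intro habs
      apply hcase
      apply Finset.Subset.antisymm
      · intro x hx
        rcases eq_or_ne x j with rfl | hxj
        · exact mem_singleton_self x
        · exact absurd (Finset.mem_erase.mpr ⟨hxj, hx⟩) (habs ▸ Finset.notMem_empty x)
      · exact Finset.singleton_subset_iff.mpr hmem.2
    unfold crpExt
    simp only [if_neg hB0ne]
    unfold addToBlock
    have h1 : insert j (B'.erase j) = B' := Finset.insert_erase hmem.2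
    have h2 : B'.erase j ∉ π'.erase B' := by
      intro habs
      have hmem2 := Finset.mem_of_mem_erase habs
      have hne2 := Finset.ne_of_mem_erase habs
      have hdisj := h.disjoint hmem2 hmem.1 hne2
      obtain ⟨x, hx⟩ := Finset.nonempty_iff_ne_empty.mpr hB0ne
      exact (Finset.disjoint_left.mp hdisj hx) (Finset.mem_of_mem_erase hx)
    rw [h1, Finset.erase_insert h2, Finset.insert_erase hmem.1]

lemma crpInv_mem {M : Finset ℕ} {π' : Finset (Finset ℕ)} (hj : j ∉ M)
    (h : IsPartition (insert j M) π') :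
    crpInv j π' ∈ (partitionsOf M).sigma (fun π => insert (∅ : Finset ℕ) π) := by
  have hjmem : j ∈ insert j M := mem_insert_self j M
  have hmem := h.blockOf_mem hjmem
  set B' := blockOf π' j with hB'
  have hsubM : ∀ C ∈ π', C ≠ B' → C ⊆ M := by
    intro C hC hne
    intro x hx
    have hxj : x ≠ j := by
      intro habs
      exact hne (h.blockOf_unique hC (habs ▸ hx))
    have := h.1 C hC hx
    rcases Finset.mem_insert.mp this with he | hm
    · exact absurd he hxj
    · exact hm
  rw [Finset.mem_sigma]
  constructor
  · rw [mem_partitionsOf]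
    unfold crpInv
    by_cases hcase : B' = {j}
    · rw [← hB', if_pos hcase]
      refine ⟨?_, ?_, ?_⟩
      · intro C hC
        exact hsubM C (Finset.mem_of_mem_erase hC)
          (hcase ▸ Finset.ne_of_mem_erase hC)
      · exact fun habs => h.2.1 (Finset.mem_of_mem_erase habs)
      · intro x hx
        have hxj : x ≠ j := fun habs => hj (habs ▸ hx)
        have hxM : x ∈ insert j M := Finset.mem_insert_of_mem hx
        rw [Finset.filter_erase, h.filter_eq hxM]
        have hne : blockOf π' x ≠ {j} := by
          intro habs
          have := (h.blockOf_mem hxM).2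
          rw [habs, mem_singleton] at this
          exact hxj this
        rw [Finset.erase_eq_of_notMem
          (by simp only [mem_singleton]; exact fun he => hne he.symm)]
        simp
    · rw [← hB', if_neg hcase]
      have hB0ne : B'.erase j ≠ ∅ := by
        intro habs
        apply hcase
        apply Finset.Subset.antisymm
        · intro x hx
          rcases eq_or_ne x j with rfl | hxj
          · exact mem_singleton_self x
          · exact absurd (Finset.mem_erase.mpr ⟨hxj, hx⟩) (habs ▸ Finset.notMem_empty x)
        · exact Finset.singleton_subset_iff.mpr hmem.2
      refine ⟨?_, ?_, ?_⟩
      · intro C hC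
        rcases Finset.mem_insert.mp hC with rfl | hC
        · intro x hx
          have hx2 := Finset.mem_of_mem_erase hx
          have := h.1 B' hmem.1 hx2
          rcases Finset.mem_insert.mp this with he | hm
          · exact absurd he (Finset.mem_erase.mp hx).1
          · exact hm
        · exact hsubM C (Finset.mem_of_mem_erase hC) (Finset.ne_of_mem_erase hC)
      · intro habs
        rcases Finset.mem_insert.mp habs with he | he
        · exact hB0ne he.symm
        · exact h.2.1 (Finset.mem_of_mem_erase he)
      · intro x hx
        have hxj : x ≠ j := fun habs => hj (habs ▸ hx)
        have hxM : x ∈ insert j M := Finset.mem_insert_of_mem hx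
        by_cases hxB : x ∈ B'
        · rw [Finset.filter_insert, if_pos (Finset.mem_erase.mpr ⟨hxj, hxB⟩)]
          have h0 : (π'.erase B').filter (fun C => x ∈ C) = ∅ := by
            rw [Finset.filter_erase, h.filter_eq hxM,
              ← h.blockOf_unique hmem.1 hxB]
            exact Finset.erase_singleton _
          rw [h0]; simp
        · rw [Finset.filter_insert, if_neg (fun habs => hxB (Finset.mem_of_mem_erase habs))]
          rw [Finset.filter_erase, h.filter_eq hxM]
          have hne : B' ∉ ({blockOf π' x} : Finset (Finset ℕ)) := by
            simp only [mem_singleton]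
            intro he
            exact hxB (he ▸ (h.blockOf_mem hxM).2)
          rw [Finset.erase_eq_of_notMem hne]
          simp
  · unfold crpInv
    by_cases hcase : B' = {j}
    · rw [← hB']
      simp [hcase]
    · rw [← hB', if_neg hcase]
      exact Finset.mem_insert_of_mem (Finset.mem_insert_self _ _)

/-- The Chinese-restaurant-process decomposition of Ewens(1)-weighted sums. -/
lemma crp {M : Finset ℕ} (hj : j ∉ M) (F : Finset (Finset ℕ) → ℝ) :
    ∑ π' ∈ partitionsOf (insert j M), pstar (insert j M) π' * F π'
      = ((M.card : ℝ) + 1)⁻¹ * ∑ π ∈ partitionsOf M, pstar M π *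
          (F (insert {j} π) + ∑ k ∈ M, F (addToBlock π j (blockOf π k))) := by
  have step1 : ∑ π' ∈ partitionsOf (insert j M), pstar (insert j M) π' * F π'
      = ∑ p ∈ (partitionsOf M).sigma (fun π => insert (∅ : Finset ℕ) π),
          pstar (insert j M) (crpExt j p) * F (crpExt j p) := by
    refine (Finset.sum_nbij' (s := partitionsOf (insert j M))
      (t := (partitionsOf M).sigma (fun π => insert (∅ : Finset ℕ) π))
      (f := fun π' => pstar (insert j M) π' * F π')
      (g := fun p => pstar (insert j M) (crpExt j p) * F (crpExt j p))
      (crpInv j) (crpExt j) ?_ ?_ ?_ ?_ ?_)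
    · intro π' hπ'
      exact crpInv_mem hj (mem_partitionsOf.mp hπ')
    · rintro ⟨π, B⟩ hp
      rw [Finset.mem_sigma] at hp
      have h := mem_partitionsOf.mp hp.1
      rw [mem_partitionsOf]
      unfold crpExt
      rcases Finset.mem_insert.mp hp.2 with rfl | hBπ
      · rw [if_pos rfl]
        exact isPartition_insert_new hj h
      · rw [if_neg (fun he : B = ∅ => h.2.1 (he ▸ hBπ))]
        exact isPartition_addToBlock hj h hBπ
    · intro π' hπ'
      exact crpExt_crpInv hj (mem_partitionsOf.mp hπ')
    · rintro ⟨π, B⟩ hp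
      rw [Finset.mem_sigma] at hp
      exact crpInv_crpExt hj (mem_partitionsOf.mp hp.1) hp.2
    · intro π' hπ'
      rw [crpExt_crpInv hj (mem_partitionsOf.mp hπ')]
  rw [step1, Finset.sum_sigma]
  rw [Finset.mul_sum]
  apply Finset.sum_congr rfl
  intro π hπ
  have h := mem_partitionsOf.mp hπ
  rw [Finset.sum_insert h.2.1]
  have hnew : crpExt j (⟨π, ∅⟩ : Σ _ : Finset (Finset ℕ), Finset ℕ) = insert {j} π := by
    unfold crpExt; rw [if_pos rfl]
  have hterm : ∀ B ∈ π, pstar (insert j M) (crpExt j ⟨π, B⟩) * F (crpExt j ⟨π, B⟩)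
      = ((M.card : ℝ) + 1)⁻¹ * ((B.card : ℝ) * pstar M π * F (addToBlock π j B)) := by
    intro B hB
    have hBne : B ≠ ∅ := fun he => h.2.1 (he ▸ hB)
    have hext : crpExt j (⟨π, B⟩ : Σ _ : Finset (Finset ℕ), Finset ℕ) = addToBlock π j B := by
      unfold crpExt; rw [if_neg hBne]
    rw [hext, pstar_addToBlock hj h hB]
    ring
  have hS : ∑ B ∈ π, (B.card : ℝ) * pstar M π * F (addToBlock π j B)
      = pstar M π * ∑ B ∈ π, (B.card : ℝ) * F (addToBlock π j B) := by
    rw [Finset.mul_sum]; apply Finset.sum_congr rfl; intros; ring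
  rw [Finset.sum_congr rfl hterm, hnew, pstar_insert_new hj h,
    IsPartition.sum_blocks h (fun B => F (addToBlock π j B)), ← Finset.mul_sum, hS]
  ring

/-- Ewens(1) weights sum to 1. -/
lemma pstar_sum (M : Finset ℕ) : ∑ π ∈ partitionsOf M, pstar M π = 1 := by
  induction M using Finset.induction_on with
  | empty => rw [partitionsOf_empty]; simp [pstar]
  | @insert a s ha ih =>
    have hc := crp (M := s) ha (fun _ => (1 : ℝ))
    simp only [mul_one] at hc
    rw [hc]
    have h2 : ∀ π ∈ partitionsOf s, pstar s π * ((1 : ℝ) + ∑ _k ∈ s, (1 : ℝ))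
        = ((s.card : ℝ) + 1) * pstar s π := by
      intro π _
      rw [Finset.sum_const]
      push_cast
      ring
    rw [Finset.sum_congr rfl h2, ← Finset.mul_sum, ih, mul_one,
      inv_mul_cancel₀ (by positivity)]

/-- The `r⋆` restriction preserves the average game. -/
lemma avg_restrict {N : Finset ℕ} (w : Game) {j : ℕ} (hj : j ∈ N) {S : Finset ℕ}
    (hS : S ⊆ N.erase j) : avg (N.erase j) (restrict1 N w j) S = avg N w S := by
  have hjS : j ∉ S := fun habs => (Finset.mem_erase.mp (hS habs)).1 rfl
  set M := (N.erase j) \ S with hM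
  have hMj : j ∉ M := by simp [hM]
  have hins : insert j M = N \ S := by
    ext x
    simp only [hM, Finset.mem_insert, Finset.mem_sdiff, Finset.mem_erase]
    constructor
    · rintro (rfl | ⟨⟨_, hxN⟩, hxS⟩)
      · exact ⟨hj, hjS⟩
      · exact ⟨hxN, hxS⟩
    · rintro ⟨hxN, hxS⟩
      rcases eq_or_ne x j with rfl | hxj
      · exact Or.inl rfl
      · exact Or.inr ⟨⟨hxj, hxN⟩, hxS⟩
  have herase : (N \ S).erase j = M := by
    ext x
    simp only [hM, Finset.mem_erase, Finset.mem_sdiff]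
    tauto
  have hsub : S ⊆ N := hS.trans (Finset.erase_subset j N)
  have hcard : ((N.card : ℝ) - S.card) = (M.card : ℝ) + 1 := by
    have h1 : M.card = (N.erase j).card - S.card := Finset.card_sdiff_of_subset hS
    have h2 : (N.erase j).card = N.card - 1 := Finset.card_erase_of_mem hj
    have h3 : S.card ≤ (N.erase j).card := Finset.card_le_card hS
    have h4 : 1 ≤ N.card := Finset.card_pos.mpr ⟨j, hj⟩
    have h5 : M.card + 1 = N.card - S.card := by omega
    have h6 : S.card ≤ N.card := Finset.card_le_card hsub
    rw [← Nat.cast_sub h6, ← h5]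
    push_cast
    ring
  calc avg (N.erase j) (restrict1 N w j) S
      = ∑ π ∈ partitionsOf M, pstar M π * (((M.card : ℝ) + 1)⁻¹ *
          (w S (insert {j} π) + ∑ k ∈ M, w S (addToBlock π j (blockOf π k)))) := by
        unfold avg restrict1
        apply Finset.sum_congr rfl
        intro π _
        rw [herase, hcard]
    _ = ((M.card : ℝ) + 1)⁻¹ * ∑ π ∈ partitionsOf M, pstar M π *
          (w S (insert {j} π) + ∑ k ∈ M, w S (addToBlock π j (blockOf π k))) := by
        rw [Finset.mul_sum]
        apply Finset.sum_congr rfl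
        intros
        ring
    _ = ∑ π' ∈ partitionsOf (insert j M), pstar (insert j M) π' * w S π' :=
        (crp hMj (w S)).symm
    _ = avg N w S := by unfold avg; rw [hins]

/-- The average game of the Sobolev reduction is the TU Sobolev reduction
of the average game. -/
lemma avg_sobRed {N : Finset ℕ} (w : Game) (φ : Sol) {j : ℕ} (hj : j ∈ N) {S : Finset ℕ}
    (hS : S ⊆ N.erase j) :
    avg (N.erase j) (sobRed N φ w j) S
      = ((S.card : ℝ) / ((N.card : ℝ) - 1)) * (avg N w (insert j S) - φ N w j)
        + (1 - (S.card : ℝ) / ((N.card : ℝ) - 1)) * avg N w S := by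
  have h1 : (N.erase j) \ S = N \ (insert j S) := by
    ext x
    simp only [Finset.mem_erase, Finset.mem_sdiff, Finset.mem_insert]
    tauto
  set a := (S.card : ℝ) / ((N.card : ℝ) - 1) with ha
  set c := φ N w j with hc
  have expand : ∀ π ∈ partitionsOf ((N.erase j) \ S),
      pstar ((N.erase j) \ S) π * (a * (w (insert j S) π - c)
        + (1 - a) * restrict1 N w j S π)
      = a * (pstar ((N.erase j) \ S) π * w (insert j S) π)
        - (a * c) * pstar ((N.erase j) \ S) π
        + (1 - a) * (pstar ((N.erase j) \ S) π * restrict1 N w j S π) := by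
    intros
    ring
  have lhs_eq : avg (N.erase j) (sobRed N φ w j) S
      = a * (∑ π ∈ partitionsOf ((N.erase j) \ S),
            pstar ((N.erase j) \ S) π * w (insert j S) π)
        - (a * c) * (∑ π ∈ partitionsOf ((N.erase j) \ S), pstar ((N.erase j) \ S) π)
        + (1 - a) * (∑ π ∈ partitionsOf ((N.erase j) \ S),
            pstar ((N.erase j) \ S) π * restrict1 N w j S π) := by
    unfold avg sobRed
    rw [Finset.sum_congr rfl expand, Finset.sum_add_distrib, Finset.sum_sub_distrib,
      ← Finset.mul_sum, ← Finset.mul_sum, ← Finset.mul_sum]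
  have e1 : ∑ π ∈ partitionsOf ((N.erase j) \ S),
      pstar ((N.erase j) \ S) π * w (insert j S) π = avg N w (insert j S) := by
    rw [h1]; rfl
  have e3 : ∑ π ∈ partitionsOf ((N.erase j) \ S),
      pstar ((N.erase j) \ S) π * restrict1 N w j S π = avg N w S := by
    have : avg (N.erase j) (restrict1 N w j) S = avg N w S := avg_restrict w hj hS
    exact this
  rw [lhs_eq, e1, e3, pstar_sum]
  ring

lemma shapley_congr {N : Finset ℕ} {v v' : TUGame} {i : ℕ} (hi : i ∈ N)
    (h : ∀ S ⊆ N, v S = v' S) : shapley N v i = shapley N v' i := by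
  unfold shapley
  apply Finset.sum_congr rfl
  intro S hS
  have hS' : S ⊆ N := (Finset.mem_powerset.mp hS).trans (Finset.erase_subset i N)
  have his : insert i S ⊆ N := Finset.insert_subset hi hS'
  rw [h S hS', h _ his]

lemma gamma_sum (P : Finset ℕ) :
    ∑ S ∈ P.powerset,
      ((S.card.factorial : ℝ) * ((P.card - S.card).factorial : ℝ))
        / (((P.card + 1).factorial : ℕ) : ℝ) = 1 := by
  rw [Finset.sum_powerset]
  have h : ∀ k ∈ Finset.range (P.card + 1),
      ∑ S ∈ P.powersetCard k,
        ((S.card.factorial : ℝ) * ((P.card - S.card).factorial : ℝ))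
          / (((P.card + 1).factorial : ℕ) : ℝ) = ((P.card : ℝ) + 1)⁻¹ := by
    intro k hk
    have hk' : k ≤ P.card := Nat.lt_succ_iff.mp (Finset.mem_range.mp hk)
    have hcongr : ∀ S ∈ P.powersetCard k,
        ((S.card.factorial : ℝ) * ((P.card - S.card).factorial : ℝ))
          / (((P.card + 1).factorial : ℕ) : ℝ)
        = ((k.factorial : ℝ) * ((P.card - k).factorial : ℝ))
          / (((P.card + 1).factorial : ℕ) : ℝ) := by
      intro S hS
      rw [(Finset.mem_powersetCard.mp hS).2]
    rw [Finset.sum_congr rfl hcongr, Finset.sum_const, Finset.card_powersetCard,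
      nsmul_eq_mul]
    have key : ((P.card.choose k : ℕ) : ℝ) * (k.factorial : ℝ) * ((P.card - k).factorial : ℝ)
        = (P.card.factorial : ℝ) := by
      exact_mod_cast Nat.choose_mul_factorial_mul_factorial hk'
    have hfac : (((P.card + 1).factorial : ℕ) : ℝ)
        = ((P.card : ℝ) + 1) * (P.card.factorial : ℝ) := by
      rw [Nat.factorial_succ]; push_cast; ring
    rw [← mul_div_assoc, ← mul_assoc, key, hfac, eq_comm, inv_eq_one_div,
      div_eq_div_iff (by positivity) (by positivity)]
    ring
  rw [Finset.sum_congr rfl h, Finset.sum_const, Finset.card_range, nsmul_eq_mul]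
  push_cast
  rw [mul_inv_cancel₀ (show ((P.card : ℝ) + 1) ≠ 0 by positivity)]

lemma powerset_erase (N : Finset ℕ) (i : ℕ) :
    (N.erase i).powerset = N.powerset.filter (fun S => i ∉ S) := by
  ext S
  simp only [Finset.mem_powerset, Finset.mem_filter, Finset.subset_erase]

/-- Efficiency of the Shapley value. -/
lemma shapley_eff (N : Finset ℕ) (v : TUGame) :
    ∑ i ∈ N, shapley N v i = v N - v ∅ := by
  rcases N.eq_empty_or_nonempty with rfl | hN
  · simp [shapley]
  unfold shapley
  have swap : ∑ i ∈ N, ∑ S ∈ (N.erase i).powerset,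
      ((S.card.factorial : ℝ) * ((N.card - S.card - 1).factorial : ℝ)) / (N.card.factorial : ℝ)
        * (v (insert i S) - v S)
      = ∑ S ∈ N.powerset, ∑ i ∈ N \ S,
      ((S.card.factorial : ℝ) * ((N.card - S.card - 1).factorial : ℝ)) / (N.card.factorial : ℝ)
        * (v (insert i S) - v S) := by
    have h1 : ∀ i ∈ N, ∑ S ∈ (N.erase i).powerset,
        ((S.card.factorial : ℝ) * ((N.card - S.card - 1).factorial : ℝ)) / (N.card.factorial : ℝ)
          * (v (insert i S) - v S)
        = ∑ S ∈ N.powerset, if i ∉ S then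
        ((S.card.factorial : ℝ) * ((N.card - S.card - 1).factorial : ℝ)) / (N.card.factorial : ℝ)
          * (v (insert i S) - v S) else 0 := by
      intro i _
      rw [powerset_erase, Finset.sum_filter]
    rw [Finset.sum_congr rfl h1, Finset.sum_comm]
    apply Finset.sum_congr rfl
    intro S _
    rw [← Finset.sum_filter]
    congr 1
    rw [Finset.sdiff_eq_filter]
  rw [swap]
  have split : ∀ S ∈ N.powerset, ∑ i ∈ N \ S,
      ((S.card.factorial : ℝ) * ((N.card - S.card - 1).factorial : ℝ)) / (N.card.factorial : ℝ)
        * (v (insert i S) - v S)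
      = (∑ i ∈ N \ S,
          ((S.card.factorial : ℝ) * ((N.card - S.card - 1).factorial : ℝ)) / (N.card.factorial : ℝ)
            * v (insert i S))
        - (((N \ S).card : ℝ) *
            (((S.card.factorial : ℝ) * ((N.card - S.card - 1).factorial : ℝ)) / (N.card.factorial : ℝ)
              * v S)) := by
    intro S _
    rw [Finset.sum_congr rfl (fun i (_ : i ∈ N \ S) => mul_sub
        (((S.card.factorial : ℝ) * ((N.card - S.card - 1).factorial : ℝ))
          / (N.card.factorial : ℝ)) (v (insert i S)) (v S)),
      Finset.sum_sub_distrib, Finset.sum_const, nsmul_eq_mul]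
  rw [Finset.sum_congr rfl split, Finset.sum_sub_distrib]
  have reindex : ∑ S ∈ N.powerset, ∑ i ∈ N \ S,
      ((S.card.factorial : ℝ) * ((N.card - S.card - 1).factorial : ℝ)) / (N.card.factorial : ℝ)
        * v (insert i S)
      = ∑ T ∈ N.powerset, (T.card : ℝ) *
          ((((T.card - 1).factorial : ℝ) * ((N.card - T.card).factorial : ℝ))
            / (N.card.factorial : ℝ) * v T) := by
    have rhs_eq : ∀ T ∈ N.powerset, (T.card : ℝ) *
        ((((T.card - 1).factorial : ℝ) * ((N.card - T.card).factorial : ℝ))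
          / (N.card.factorial : ℝ) * v T)
        = ∑ _i ∈ T, (((T.card - 1).factorial : ℝ) * ((N.card - T.card).factorial : ℝ))
            / (N.card.factorial : ℝ) * v T := by
      intro T _
      rw [Finset.sum_const, nsmul_eq_mul]
    rw [Finset.sum_congr rfl rhs_eq, Finset.sum_sigma', Finset.sum_sigma']
    refine Finset.sum_nbij'
      (fun p => (⟨insert p.2 p.1, p.2⟩ : Σ _ : Finset ℕ, ℕ))
      (fun p => (⟨p.1.erase p.2, p.2⟩ : Σ _ : Finset ℕ, ℕ)) ?_ ?_ ?_ ?_ ?_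
    · rintro ⟨S, i⟩ hp
      rw [Finset.mem_sigma] at hp ⊢
      obtain ⟨hS, hi⟩ := hp
      rw [Finset.mem_powerset] at hS ⊢
      rw [Finset.mem_sdiff] at hi
      exact ⟨Finset.insert_subset hi.1 hS, Finset.mem_insert_self _ _⟩
    · rintro ⟨T, i⟩ hp
      rw [Finset.mem_sigma] at hp ⊢
      obtain ⟨hT, hi⟩ := hp
      rw [Finset.mem_powerset] at hT ⊢
      refine ⟨(Finset.erase_subset i T).trans hT, ?_⟩
      rw [Finset.mem_sdiff]
      exact ⟨hT hi, Finset.notMem_erase i T⟩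
    · rintro ⟨S, i⟩ hp
      rw [Finset.mem_sigma, Finset.mem_sdiff] at hp
      simp [Finset.erase_insert hp.2.2]
    · rintro ⟨T, i⟩ hp
      rw [Finset.mem_sigma] at hp
      simp [Finset.insert_erase hp.2]
    · rintro ⟨S, i⟩ hp
      rw [Finset.mem_sigma, Finset.mem_sdiff] at hp
      dsimp only
      rw [Finset.card_insert_of_notMem hp.2.2, Nat.add_sub_cancel, ← Nat.sub_sub]
  rw [reindex]
  rw [← Finset.sum_sub_distrib]
  have hsub : ({∅, N} : Finset (Finset ℕ)) ⊆ N.powerset := by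
    intro T hT
    rcases Finset.mem_insert.mp hT with rfl | hT
    · exact Finset.empty_mem_powerset N
    · rw [Finset.mem_singleton] at hT
      exact hT ▸ Finset.mem_powerset_self N
  have hz : ∀ T ∈ N.powerset, T ∉ ({∅, N} : Finset (Finset ℕ)) →
      (T.card : ℝ) * ((((T.card - 1).factorial : ℝ) * ((N.card - T.card).factorial : ℝ))
          / (N.card.factorial : ℝ) * v T)
        - ((N \ T).card : ℝ) *
            (((T.card.factorial : ℝ) * ((N.card - T.card - 1).factorial : ℝ))
              / (N.card.factorial : ℝ) * v T) = 0 := by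
    intro T hT hTn
    rw [Finset.mem_powerset] at hT
    simp only [Finset.mem_insert, Finset.mem_singleton, not_or] at hTn
    have ht0 : T.card ≠ 0 := fun h => hTn.1 (Finset.card_eq_zero.mp h)
    have htn : T.card < N.card :=
      Finset.card_lt_card (Finset.ssubset_iff_subset_ne.mpr ⟨hT, hTn.2⟩)
    have hds : (N \ T).card = N.card - T.card := Finset.card_sdiff_of_subset hT
    have e1 : (T.card : ℝ) * ((T.card - 1).factorial : ℝ) = (T.card.factorial : ℝ) := by
      exact_mod_cast Nat.mul_factorial_pred ht0
    have e2 : ((N.card - T.card : ℕ) : ℝ) * ((N.card - T.card - 1).factorial : ℝ)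
        = ((N.card - T.card).factorial : ℝ) := by
      exact_mod_cast Nat.mul_factorial_pred (by omega)
    rw [hds]
    have hfne : (N.card.factorial : ℝ) ≠ 0 := by positivity
    field_simp
    linear_combination ((N.card - T.card).factorial : ℝ) * v T * e1
      - (T.card.factorial : ℝ) * v T * e2
  rw [← Finset.sum_subset hsub hz]
  have hne : (∅ : Finset ℕ) ≠ N := fun h => (Finset.nonempty_iff_ne_empty.mp hN) h.symm
  rw [Finset.sum_pair hne]
  have hn0 : N.card ≠ 0 := Finset.card_ne_zero_of_mem (hN.choose_spec)
  have e3 : (N.card : ℝ) * ((N.card - 1).factorial : ℝ) = (N.card.factorial : ℝ) := by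
    exact_mod_cast Nat.mul_factorial_pred hn0
  have hfne : (N.card.factorial : ℝ) ≠ 0 := by positivity
  have hterm1 : (((∅ : Finset ℕ).card : ℝ)) * (((((∅ : Finset ℕ).card - 1).factorial : ℝ)
        * ((N.card - (∅ : Finset ℕ).card).factorial : ℝ)) / (N.card.factorial : ℝ) * v ∅)
      - ((N \ (∅ : Finset ℕ)).card : ℝ) *
          ((((∅ : Finset ℕ).card.factorial : ℝ)
            * ((N.card - (∅ : Finset ℕ).card - 1).factorial : ℝ))
              / (N.card.factorial : ℝ) * v ∅) = - v ∅ := by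
    simp only [Finset.card_empty, Finset.sdiff_empty, Nat.cast_zero, zero_mul,
      Nat.factorial_zero, Nat.cast_one, one_mul, Nat.sub_zero, zero_sub]
    rw [neg_eq_iff_eq_neg, neg_neg]
    field_simp
    linear_combination v ∅ * e3
  have hterm2 : ((N.card : ℝ)) * ((((N.card - 1).factorial : ℝ)
        * ((N.card - N.card).factorial : ℝ)) / (N.card.factorial : ℝ) * v N)
      - ((N \ N).card : ℝ) *
          (((N.card.factorial : ℝ) * ((N.card - N.card - 1).factorial : ℝ))
            / (N.card.factorial : ℝ) * v N) = v N := by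
    simp only [Nat.sub_self, Finset.sdiff_self, Finset.card_empty, Nat.cast_zero, zero_mul,
      Nat.factorial_zero, Nat.cast_one, mul_one, sub_zero]
    field_simp
    linear_combination v N * e3
  rw [hterm1, hterm2]
  ring

/-- Sobolev consistency of the Shapley value, with a general constant `c`
replacing the removed player's payoff. -/
lemma tu_sob {N : Finset ℕ} (v : TUGame) (c : ℝ) {i j : ℕ} (hi : i ∈ N) (hj : j ∈ N)
    (hij : i ≠ j) :
    shapley (N.erase j)
      (fun S => ((S.card : ℝ) / ((N.card : ℝ) - 1)) * (v (insert j S) - c)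
        + (1 - (S.card : ℝ) / ((N.card : ℝ) - 1)) * v S) i
    = shapley N v i + (shapley N v j - c) / ((N.card : ℝ) - 1) := by
  have hij' : i ∈ N.erase j := Finset.mem_erase.mpr ⟨hij, hi⟩
  have hji' : j ∈ N.erase i := Finset.mem_erase.mpr ⟨hij.symm, hj⟩
  set P := (N.erase j).erase i with hP
  have hjP : j ∉ P := fun h =>
    (Finset.mem_erase.mp (Finset.mem_of_mem_erase h)).1 rfl
  have hiP : i ∉ P := Finset.notMem_erase i _
  have hPj : insert j P = N.erase i := by
    rw [hP, Finset.erase_right_comm]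
    exact Finset.insert_erase hji'
  have hPi : insert i P = N.erase j := by
    rw [hP]
    exact Finset.insert_erase hij'
  have hcard_ej : (N.erase j).card = N.card - 1 := Finset.card_erase_of_mem hj
  have hn2 : 2 ≤ N.card := Finset.one_lt_card.mpr ⟨i, hi, j, hj, hij⟩
  have hPcard : P.card = N.card - 2 := by
    rw [hP, Finset.card_erase_of_mem hij', hcard_ej]
    omega
  have hgamma : ∑ S ∈ P.powerset,
      ((S.card.factorial : ℝ) * (((N.erase j).card - S.card - 1).factorial : ℝ))
        / ((N.erase j).card.factorial : ℝ) = 1 := by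
    have hconv : ∀ S ∈ P.powerset,
        ((S.card.factorial : ℝ) * (((N.erase j).card - S.card - 1).factorial : ℝ))
          / ((N.erase j).card.factorial : ℝ)
        = ((S.card.factorial : ℝ) * ((P.card - S.card).factorial : ℝ))
            / (((P.card + 1).factorial : ℕ) : ℝ) := by
      intro S hS
      rw [show (N.erase j).card = P.card + 1 from by omega,
        show P.card + 1 - S.card - 1 = P.card - S.card from by omega]
    rw [Finset.sum_congr rfl hconv]
    exact gamma_sum P
  have hShi : shapley N v i
      = (∑ S ∈ P.powerset,
          ((S.card.factorial : ℝ) * ((N.card - S.card - 1).factorial : ℝ))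
            / (N.card.factorial : ℝ) * (v (insert i S) - v S))
        + ∑ S ∈ P.powerset,
          (((insert j S).card.factorial : ℝ)
              * ((N.card - (insert j S).card - 1).factorial : ℝ))
            / (N.card.factorial : ℝ) * (v (insert i (insert j S)) - v (insert j S)) := by
    unfold shapley
    rw [← hPj, Finset.sum_powerset_insert hjP]
  have hShj : shapley N v j
      = (∑ S ∈ P.powerset,
          ((S.card.factorial : ℝ) * ((N.card - S.card - 1).factorial : ℝ))
            / (N.card.factorial : ℝ) * (v (insert j S) - v S))
        + ∑ S ∈ P.powerset,
          (((insert i S).card.factorial : ℝ)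
              * ((N.card - (insert i S).card - 1).factorial : ℝ))
            / (N.card.factorial : ℝ) * (v (insert j (insert i S)) - v (insert i S)) := by
    unfold shapley
    rw [← hPi, Finset.sum_powerset_insert hiP]
  have hLHS : shapley (N.erase j)
      (fun S => ((S.card : ℝ) / ((N.card : ℝ) - 1)) * (v (insert j S) - c)
        + (1 - (S.card : ℝ) / ((N.card : ℝ) - 1)) * v S) i
      = ∑ S ∈ P.powerset,
          ((S.card.factorial : ℝ) * (((N.erase j).card - S.card - 1).factorial : ℝ))
            / ((N.erase j).card.factorial : ℝ)
          * (((((insert i S).card : ℝ) / ((N.card : ℝ) - 1))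
                * (v (insert j (insert i S)) - c)
              + (1 - ((insert i S).card : ℝ) / ((N.card : ℝ) - 1)) * v (insert i S))
            - (((S.card : ℝ) / ((N.card : ℝ) - 1)) * (v (insert j S) - c)
              + (1 - (S.card : ℝ) / ((N.card : ℝ) - 1)) * v S)) := by
    unfold shapley
    rw [← hP]
  rw [hLHS, hShi, hShj]
  have key : ∀ S ∈ P.powerset,
      ((S.card.factorial : ℝ) * (((N.erase j).card - S.card - 1).factorial : ℝ))
          / ((N.erase j).card.factorial : ℝ)
        * (((((insert i S).card : ℝ) / ((N.card : ℝ) - 1))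
              * (v (insert j (insert i S)) - c)
            + (1 - ((insert i S).card : ℝ) / ((N.card : ℝ) - 1)) * v (insert i S))
          - (((S.card : ℝ) / ((N.card : ℝ) - 1)) * (v (insert j S) - c)
            + (1 - (S.card : ℝ) / ((N.card : ℝ) - 1)) * v S))
      = ((S.card.factorial : ℝ) * ((N.card - S.card - 1).factorial : ℝ))
            / (N.card.factorial : ℝ) * (v (insert i S) - v S)
        + (((insert j S).card.factorial : ℝ)
              * ((N.card - (insert j S).card - 1).factorial : ℝ))
            / (N.card.factorial : ℝ) * (v (insert i (insert j S)) - v (insert j S))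
        + (((S.card.factorial : ℝ) * ((N.card - S.card - 1).factorial : ℝ))
              / (N.card.factorial : ℝ) * (v (insert j S) - v S)
            + (((insert i S).card.factorial : ℝ)
                * ((N.card - (insert i S).card - 1).factorial : ℝ))
              / (N.card.factorial : ℝ) * (v (insert j (insert i S)) - v (insert i S))
            - ((S.card.factorial : ℝ) * (((N.erase j).card - S.card - 1).factorial : ℝ))
              / ((N.erase j).card.factorial : ℝ) * c) / ((N.card : ℝ) - 1) := by
    intro S hS
    have hSP : S ⊆ P := Finset.mem_powerset.mp hS
    have hiS : i ∉ S := fun h => hiP (hSP h)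
    have hjS : j ∉ S := fun h => hjP (hSP h)
    have hcs : S.card ≤ P.card := Finset.card_le_card hSP
    obtain ⟨t, ht⟩ : ∃ t, N.card = S.card + t + 2 := ⟨P.card - S.card, by omega⟩
    have hjiS : j ∉ insert i S := by
      rw [Finset.mem_insert]
      push_neg
      exact ⟨hij.symm, hjS⟩
    have hco : insert i (insert j S) = insert j (insert i S) := Finset.insert_comm i j S
    have c1 : (insert i S).card = S.card + 1 := Finset.card_insert_of_notMem hiS
    have c2 : (insert j S).card = S.card + 1 := Finset.card_insert_of_notMem hjS
    rw [hco, c1, c2, hcard_ej, ht,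
      show S.card + t + 2 - S.card - 1 = t + 1 from by omega,
      show S.card + t + 2 - (S.card + 1) - 1 = t from by omega,
      show S.card + t + 2 - 1 = S.card + t + 1 from by omega,
      show S.card + t + 1 - S.card - 1 = t from by omega,
      Nat.factorial_succ t,
      Nat.factorial_succ S.card,
      show (S.card + t + 2).factorial = (S.card + t + 2) * (S.card + t + 1).factorial
        from by rw [show S.card + t + 2 = (S.card + t + 1) + 1 from by omega]; rfl]
    push_cast
    have nz1 : ((S.card : ℝ) + (t : ℝ) + 1) ≠ 0 := by positivity
    have nz2 : (((S.card + t + 1).factorial : ℕ) : ℝ) ≠ 0 := by positivity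
    have nz3 : ((S.card.factorial : ℕ) : ℝ) ≠ 0 := by positivity
    have nz4 : ((t.factorial : ℕ) : ℝ) ≠ 0 := by positivity
    have nz5 : ((S.card : ℝ) + (t : ℝ) + 2) ≠ 0 := by positivity
    have nz6 : ((S.card : ℝ) + (t : ℝ) + 2 - 1) ≠ 0 := by
      intro h; apply nz1; linarith
    field_simp
    ring
  rw [Finset.sum_congr rfl key]
  rw [Finset.sum_add_distrib, Finset.sum_add_distrib, ← Finset.sum_div,
    Finset.sum_sub_distrib, Finset.sum_add_distrib, ← Finset.sum_mul, hgamma, one_mul]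

lemma avg_empty_set {N : Finset ℕ} {w : Game} (hw : IsTUX w) : avg N w ∅ = 0 := by
  unfold avg
  apply Finset.sum_eq_zero
  intro π _
  rw [hw π, mul_zero]

lemma avg_self {N : Finset ℕ} (w : Game) : avg N w N = w N ∅ := by
  unfold avg
  rw [Finset.sdiff_self, partitionsOf_empty, Finset.sum_singleton]
  unfold pstar
  simp

lemma MPW_eff : EfficientX MPWsol := by
  intro N w hw
  unfold MPWsol MPW
  rw [shapley_eff N (avg N w), avg_self, avg_empty_set hw, sub_zero]

lemma pstar_singleton (x : ℕ) : pstar {x} {({x} : Finset ℕ)} = 1 := by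
  unfold pstar
  simp

lemma MPW_2std : TwoStandardX MPWsol := by
  intro i j hij w hw
  have hij : i ∉ ({j} : Finset ℕ) := by simp [hij]
  have hNe : ({i, j} : Finset ℕ).erase i = {j} := Finset.erase_insert hij
  have hcard : ({i, j} : Finset ℕ).card = 2 := by
    rw [Finset.card_insert_of_notMem hij, Finset.card_singleton]
  have hd1 : ({i, j} : Finset ℕ) \ {i} = {j} := by
    ext x
    simp only [Finset.mem_sdiff, Finset.mem_insert, Finset.mem_singleton]
    constructor
    · rintro ⟨rfl | rfl, hx⟩
      · exact absurd rfl hx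
      · rfl
    · rintro rfl
      exact ⟨Or.inr rfl, fun h => hij (by simp [h])⟩
  have hd2 : ({i, j} : Finset ℕ) \ {j} = {i} := by
    ext x
    simp only [Finset.mem_sdiff, Finset.mem_insert, Finset.mem_singleton]
    constructor
    · rintro ⟨rfl | rfl, hx⟩
      · rfl
      · exact absurd rfl hx
    · rintro rfl
      exact ⟨Or.inl rfl, fun h => hij (by simp [h])⟩
  have havg1 : avg {i, j} w {i} = w {i} {({j} : Finset ℕ)} := by
    unfold avg
    rw [hd1, partitionsOf_singleton j, Finset.sum_singleton, pstar_singleton, one_mul]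
  have havg2 : avg {i, j} w {j} = w {j} {({i} : Finset ℕ)} := by
    unfold avg
    rw [hd2, partitionsOf_singleton i, Finset.sum_singleton, pstar_singleton, one_mul]
  have hpow : ({j} : Finset ℕ).powerset = {∅, {j}} := by
    rw [show ({j} : Finset ℕ) = insert j ∅ from rfl, Finset.powerset_insert,
      Finset.powerset_empty, Finset.image_singleton]
    rfl
  unfold MPWsol MPW shapley
  rw [hNe, hpow,
    Finset.sum_pair (fun h => (Finset.singleton_ne_empty j) h.symm)]
  rw [show insert i (∅ : Finset ℕ) = {i} from rfl,
    show insert i ({j} : Finset ℕ) = {i, j} from rfl,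
    havg1, havg2, avg_self, avg_empty_set hw, hcard]
  norm_num [Nat.factorial]
  ring

lemma sobRed_TUX {N : Finset ℕ} {w : Game} (hw : IsTUX w) (φ : Sol) (j : ℕ) :
    IsTUX (sobRed N φ w j) := by
  intro π
  unfold sobRed restrict1
  simp only [Finset.card_empty, Nat.cast_zero, zero_div, zero_mul, zero_add, sub_zero,
    one_mul, Finset.sdiff_empty, zero_sub, neg_zero]
  rw [hw, Finset.sum_eq_zero (fun k _ => hw _)]
  simp

lemma mpw_key {N : Finset ℕ} (w : Game) (φ : Sol) {i j : ℕ} (hi : i ∈ N) (hj : j ∈ N)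
    (hij : i ≠ j) :
    MPWsol (N.erase j) (sobRed N φ w j) i
      = MPWsol N w i + (MPWsol N w j - φ N w j) / ((N.card : ℝ) - 1) := by
  unfold MPWsol MPW
  have hcong : shapley (N.erase j) (avg (N.erase j) (sobRed N φ w j)) i
      = shapley (N.erase j)
          (fun S => ((S.card : ℝ) / ((N.card : ℝ) - 1)) * (avg N w (insert j S) - φ N w j)
            + (1 - (S.card : ℝ) / ((N.card : ℝ) - 1)) * avg N w S) i := by
    apply shapley_congr (Finset.mem_erase.mpr ⟨hij, hi⟩)
    intro S hS
    exact avg_sobRed w φ hj hS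
  rw [hcong, tu_sob (avg N w) (φ N w j) hi hj hij]

lemma MPW_SC : SobolevConsistentX MPWsol := by
  intro N w hw i hi j hj hij
  rw [mpw_key w MPWsol hi hj hij]
  simp

lemma uniq (φ : Sol) (hEF : EfficientX φ) (h2S : TwoStandardX φ) (hSC : SobolevConsistentX φ) :
    ∀ (N : Finset ℕ) (w : Game), IsTUX w → ∀ i ∈ N, φ N w i = MPWsol N w i := by
  suffices h : ∀ n (N : Finset ℕ), N.card = n → ∀ w : Game, IsTUX w →
      ∀ i ∈ N, φ N w i = MPWsol N w i by
    intro N w hw i hi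
    exact h N.card N rfl w hw i hi
  intro n
  induction n using Nat.strong_induction_on with
  | _ n ih =>
  intro N hN w hw i hi
  have hn1 : 1 ≤ n := by
    rw [← hN]
    exact Finset.card_pos.mpr ⟨i, hi⟩
  by_cases h1 : n = 1
  · have hN1 : N.card = 1 := by omega
    obtain ⟨a, ha⟩ := Finset.card_eq_one.mp hN1
    have hai : a = i := by
      rw [ha, Finset.mem_singleton] at hi
      exact hi.symm
    subst hai
    have e1 := hEF N w hw
    have e2 := MPW_eff N w hw
    rw [ha, Finset.sum_singleton] at e1 e2
    rw [ha, e1, e2]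
  by_cases h2 : n = 2
  · have hcard1 : (N.erase i).card = 1 := by
      rw [Finset.card_erase_of_mem hi]
      omega
    obtain ⟨j, hj⟩ := Finset.card_eq_one.mp hcard1
    have hij : i ≠ j := by
      intro he
      have hjm : j ∈ N.erase i := hj ▸ Finset.mem_singleton_self j
      rw [← he] at hjm
      exact (Finset.mem_erase.mp hjm).1 rfl
    have hNij : insert i ({j} : Finset ℕ) = N := by
      rw [← hj, Finset.insert_erase hi]
    rw [← hNij]
    exact (h2S i j hij w hw).trans (MPW_2std i j hij w hw).symm
  · have hn3 : 3 ≤ n := by omega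
    have main : ∀ a ∈ N, ∀ b ∈ N, a ≠ b →
        φ N w a - MPWsol N w a = -(φ N w b - MPWsol N w b) / ((N.card : ℝ) - 1) := by
      intro a ha b hb hab
      have hstep := hSC N w hw a ha b hb hab
      have hTux : IsTUX (sobRed N φ w b) := sobRed_TUX hw φ b
      have hih : φ (N.erase b) (sobRed N φ w b) a
          = MPWsol (N.erase b) (sobRed N φ w b) a :=
        ih (n - 1) (by omega) (N.erase b)
          (by rw [Finset.card_erase_of_mem hb, hN]) _ hTux a
          (Finset.mem_erase.mpr ⟨hab, ha⟩)
      rw [hstep, hih, mpw_key w φ ha hb hab]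
      ring
    obtain ⟨j, hj'⟩ : (N.erase i).Nonempty := by
      rw [← Finset.card_pos, Finset.card_erase_of_mem hi]
      omega
    have hj : j ∈ N := Finset.mem_of_mem_erase hj'
    have hij : i ≠ j := fun he => (Finset.mem_erase.mp hj').1 he.symm
    have hm2 : (2 : ℝ) ≤ (N.card : ℝ) - 1 := by
      have : (3 : ℝ) ≤ (N.card : ℝ) := by
        rw [hN]
        exact_mod_cast hn3
      linarith
    have hmne : ((N.card : ℝ) - 1) ≠ 0 := by linarith
    have h1' : (φ N w i - MPWsol N w i) * ((N.card : ℝ) - 1)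
        = -(φ N w j - MPWsol N w j) := by
      rw [main i hi j hj hij]
      field_simp
    have h2' : (φ N w j - MPWsol N w j) * ((N.card : ℝ) - 1)
        = -(φ N w i - MPWsol N w i) := by
      rw [main j hj i hi hij.symm]
      field_simp
    have h3 : (φ N w i - MPWsol N w i) *
        (((N.card : ℝ) - 1) * ((N.card : ℝ) - 1) - 1) = 0 := by
      linear_combination ((N.card : ℝ) - 1) * h1' - h2'
    have h4 : ((N.card : ℝ) - 1) * ((N.card : ℝ) - 1) - 1 ≠ 0 := by nlinarith
    have h5 : φ N w i - MPWsol N w i = 0 := by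
      rcases mul_eq_zero.mp h3 with h | h
      · exact h
      · exact absurd h h4
    linarith

end TUX

open TUX in
/-- The MPW solution is the unique solution for TUX games
satisfying efficiency, 2-standardness, and Sobolev consistency. -/
theorem MPW_unique_EF_2S_SC :
    (EfficientX MPWsol ∧ TwoStandardX MPWsol ∧ SobolevConsistentX MPWsol) ∧
      ∀ φ : Sol, EfficientX φ → TwoStandardX φ → SobolevConsistentX φ →
        ∀ (N : Finset ℕ) (w : Game), IsTUX w → ∀ i ∈ N, φ N w i = MPWsol N w i := by
  exact ⟨⟨MPW_eff, MPW_2std, MPW_SC⟩, fun φ hEF h2S hSC => uniq φ hEF h2S hSC⟩
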